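/- Let B and A be metric spaces and f : B → A. Then χ(f) ≤ χ_u(f), where χ(f) = sup_{b∈B} χ(f,b) is the jump of f and χ_u(f) = inf_{δ>0} sup_{b∈B} diam f(B_δ(b)) is the uniform jump of f (B_δ(b) the open δ-ball about b). Moreover, if B is compact, then χ(f) = χ_u(f). -/

import Mathlib

open scoped ENNReal

/-- The jump of `f` at `b`: the infimum, over open neighborhoods `U` of `b`,
of the diameter (in `[0,∞]`) of `f '' U`. -/
noncomputable def jumpAt {B A : Type*} [TopologicalSpace B] [PseudoEMetricSpace A]
    (f : B → A) (b : B) : ℝ≥0∞ :=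
  ⨅ (U : Set B) (_ : IsOpen U) (_ : b ∈ U), EMetric.diam (f '' U)

/-- The jump of `f`: the supremum over all points of the jump of `f` there. -/
noncomputable def jump {B A : Type*} [TopologicalSpace B] [PseudoEMetricSpace A]
    (f : B → A) : ℝ≥0∞ :=
  ⨆ b, jumpAt f b

/-- The uniform jump of `f` between metric spaces:
`inf_{δ>0} sup_{b} diam f(B_δ(b))`. -/
noncomputable def uniformJump {B A : Type*} [PseudoMetricSpace B] [PseudoEMetricSpace A]
    (f : B → A) : ℝ≥0∞ :=
  ⨅ (δ : ℝ) (_ : 0 < δ), ⨆ b, EMetric.diam (f '' Metric.ball b δ)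

/-- The jump is at most the uniform jump; they are equal when the domain is compact. -/
theorem jump_le_uniformJump_and_eq_of_compact {B A : Type*} [MetricSpace B] [MetricSpace A]
    (f : B → A) :
    jump f ≤ uniformJump f ∧ (CompactSpace B → jump f = uniformJump f) := by
  have h1 : jump f ≤ uniformJump f := by
    refine le_iInf₂ fun δ hδ => iSup_le fun b => ?_
    refine le_trans ?_ (le_iSup _ b)
    exact iInf₂_le_of_le (Metric.ball b δ) Metric.isOpen_ball
      (iInf_le_of_le (Metric.mem_ball_self hδ) le_rfl)
  refine ⟨h1, fun hB => ?_⟩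
  refine le_antisymm h1 ?_
  by_contra hlt
  push_neg at hlt
  obtain ⟨c, hc1, hc2⟩ := exists_between hlt
  have hU : ∀ b : B, ∃ U : Set B, IsOpen U ∧ b ∈ U ∧ EMetric.diam (f '' U) < c := by
    intro b
    have hb : jumpAt f b < c := lt_of_le_of_lt (le_iSup _ b) hc1
    simp only [jumpAt, iInf_lt_iff] at hb
    obtain ⟨U, hUo, hUb, hUd⟩ := hb
    exact ⟨U, hUo, hUb, hUd⟩
  choose U hUo hUb hUd using hU
  obtain ⟨δ, hδ, hcov⟩ := lebesgue_number_lemma_of_metric isCompact_univ hUo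
    (fun x _ => Set.mem_iUnion.2 ⟨x, hUb x⟩)
  have hle : uniformJump f ≤ c := by
    refine iInf₂_le_of_le δ hδ (iSup_le fun b => ?_)
    obtain ⟨i, hi⟩ := hcov b (Set.mem_univ b)
    exact le_trans (EMetric.diam_mono (Set.image_mono (f := f) hi)) (hUd i).le
  exact hc2.not_ge hle
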